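/- For every regular cardinal λ, the one-point space is not a λ-presentable object of the category of compact Hausdorff spaces. Consequently, the empty space is the only presentable object of the category of compact Hausdorff spaces. -/

import Mathlib

universe w v u v₁ u₁ v₂ u₂

open CategoryTheory Limits Opposite

namespace Paper

variable {M : Type u} [Category.{v} M]

/-! ### Lifting properties, weak factorization systems -/

/-- The class of morphisms with the right lifting property against a set of arrows. -/
def rlpSet (X : Set (Arrow M)) : MorphismProperty M :=
  fun _ _ f => ∀ a ∈ X, HasLiftingProperty a.hom f

/-- The right lifting property class of a class of morphisms. -/
def rlpC (L : MorphismProperty M) : MorphismProperty M :=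
  fun _ _ f => ∀ ⦃A B : M⦄ (g : A ⟶ B), L g → HasLiftingProperty g f

/-- The left lifting property class of a class of morphisms. -/
def llpC (R : MorphismProperty M) : MorphismProperty M :=
  fun _ _ f => ∀ ⦃A B : M⦄ (g : A ⟶ B), R g → HasLiftingProperty f g

/-- A weak factorization system `(L, R)`. -/
structure IsWFS (L R : MorphismProperty M) : Prop where
  rlp_eq : rlpC L = R
  llp_eq : llpC R = L
  factorization : ∀ ⦃A B : M⦄ (f : A ⟶ B),
    ∃ (Z : M) (i : A ⟶ Z) (p : Z ⟶ B), L i ∧ R p ∧ i ≫ p = f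

/-! ### Posets, smooth and good diagrams -/

/-- `a` is the predecessor of `b`; equivalently `b` is isolated with predecessor `a`. -/
def IsSuccOf {P : Type w} [PartialOrder P] (a b : P) : Prop :=
  a < b ∧ ∀ c : P, c < b → c ≤ a

/-- A limit element of a good poset: not the least element and not isolated. -/
def IsLimitElem {P : Type w} [PartialOrder P] [OrderBot P] (b : P) : Prop :=
  b ≠ ⊥ ∧ ¬ ∃ a : P, IsSuccOf a b

/-- A preorder is `κ`-directed if every subset of cardinality `< κ` has an upper bound. -/
def CardDirected (κ : Cardinal.{w}) (P : Type w) [Preorder P] : Prop :=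
  ∀ s : Set P, Cardinal.mk s < κ → ∃ b : P, ∀ x ∈ s, x ≤ b

/-- A category is `κ`-filtered if every diagram indexed by a category with fewer
than `κ` morphisms admits a cocone. -/
def CardFiltered (κ : Cardinal.{v}) (J : Type u₁) [Category.{v₁} J] : Prop :=
  ∀ (A : Type v) [SmallCategory A], Cardinal.mk (Arrow A) < κ →
    ∀ F : A ⥤ J, Nonempty (Cocone F)

section Smooth

variable {P : Type w} [PartialOrder P] (D : P ⥤ M)

/-- Restriction of a diagram to the initial segment `{y | y < b}`. -/
def restrictIio (b : P) : {y : P // y < b} ⥤ M :=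
  Monotone.functor (f := fun y : {y : P // y < b} => (y : P)) (fun _ _ h => h) ⋙ D

/-- The canonical cocone on the restriction of `D` to `{y | y < b}` with point `D.obj b`. -/
def iioCocone (b : P) : Cocone (restrictIio D b) where
  pt := D.obj b
  ι :=
    { app := fun y => D.map (homOfLE y.2.le)
      naturality := fun y z f => by
        dsimp [restrictIio, Monotone.functor]
        rw [Category.comp_id, ← D.map_comp]
        rfl }

/-- A diagram over a poset with a least element is smooth if at every limit element the
canonical cocone of the restriction to the strict initial segment is a colimit cocone. -/
def IsSmooth [OrderBot P] : Prop :=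
  ∀ b : P, IsLimitElem b → Nonempty (IsColimit (iioCocone D b))

end Smooth

/-! ### Cellular morphisms and cofibrations -/

/-- `Q` contains the set of arrows `X`. -/
def ContainsX (X : Set (Arrow M)) (Q : MorphismProperty M) : Prop :=
  ∀ a ∈ X, Q a.hom

/-- `Q` is stable under pushouts of morphisms in `X` along arbitrary morphisms. -/
def StableUnderPushoutsOf (X : Set (Arrow M)) (Q : MorphismProperty M) : Prop :=
  ∀ ⦃A B A' B' : M⦄ (u : A ⟶ A') (f : A ⟶ B) (g : A' ⟶ B') (v : B ⟶ B'),
    Arrow.mk f ∈ X → IsPushout u f g v → Q g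

/-- `Q` is stable under transfinite compositions: for every smooth diagram over a
well-ordered set with least element, all of whose links lie in `Q`, the composite
(the component at `⊥` of any colimit cocone) lies in `Q`. -/
def StableUnderTransfiniteComposition (Q : MorphismProperty M) : Prop :=
  ∀ (β : Type v) [LinearOrder β] [OrderBot β], WellFoundedLT β →
    ∀ (D : β ⥤ M), IsSmooth D →
      (∀ (a b : β) (h : IsSuccOf a b), Q (D.map (homOfLE h.1.le))) →
      ∀ (c : Cocone D), IsColimit c → Q (c.ι.app ⊥)

/-- `Q` is stable under retracts (in the arrow category). -/
def IsRetractOf {A B A' B' : M} (f : A ⟶ B) (g : A' ⟶ B') : Prop :=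
  ∃ (iA : A ⟶ A') (rA : A' ⟶ A) (iB : B ⟶ B') (rB : B' ⟶ B),
    iA ≫ rA = 𝟙 A ∧ iB ≫ rB = 𝟙 B ∧ iA ≫ g = f ≫ iB ∧ rA ≫ f = g ≫ rB

def StableUnderRetracts (Q : MorphismProperty M) : Prop :=
  ∀ ⦃A B A' B' : M⦄ (f : A ⟶ B) (g : A' ⟶ B'), IsRetractOf f g → Q g → Q f

/-- `Q` contains `X` and is closed under pushouts along `X` and transfinite compositions. -/
def IsCellClosed (X : Set (Arrow M)) (Q : MorphismProperty M) : Prop :=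
  ContainsX X Q ∧ StableUnderPushoutsOf X Q ∧ StableUnderTransfiniteComposition Q

/-- The class of `X`-cellular morphisms: the smallest class containing `X` closed under
pushouts along morphisms of `X` and transfinite compositions. -/
def cellP (X : Set (Arrow M)) : MorphismProperty M :=
  fun _ _ f => ∀ Q : MorphismProperty M, IsCellClosed X Q → Q f

/-- The class of `X`-cofibrations: the smallest class containing `X` closed under
pushouts along morphisms of `X`, transfinite compositions and retracts. -/
def cofP (X : Set (Arrow M)) : MorphismProperty M :=
  fun _ _ f => ∀ Q : MorphismProperty M, IsCellClosed X Q → StableUnderRetracts Q → Q f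

/-! ### Smallness and presentability -/

/-- `Hom(A, -)` maps the colimit cocone `c` to a colimit cocone in types. -/
def CoyonedaPreserves (A : M) {J : Type u₁} [Category.{v₁} J] (D : J ⥤ M) (c : Cocone D) :
    Prop :=
  Nonempty (IsColimit ((coyoneda.obj (op A)).mapCocone c))

/-- `A` is `κ`-small relative to `X`: `Hom(A, -)` preserves colimits of smooth κ-directed
well-ordered chains whose links are `X`-cellular. -/
def SmallRel (κ : Cardinal.{v}) (X : Set (Arrow M)) (A : M) : Prop :=
  ∀ (P : Type v) [LinearOrder P] [OrderBot P], WellFoundedLT P → CardDirected κ P →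
    ∀ (D : P ⥤ M), IsSmooth D →
      (∀ (a b : P) (h : IsSuccOf a b), cellP X (D.map (homOfLE h.1.le))) →
      ∀ (c : Cocone D), IsColimit c → CoyonedaPreserves A D c

/-- `A` is strictly `κ`-small relative to `X`: `Hom(A, -)` preserves colimits of κ-directed
good (smooth, well-founded with bottom) diagrams whose links are `X`-cellular. -/
def StrictlySmallRel (κ : Cardinal.{v}) (X : Set (Arrow M)) (A : M) : Prop :=
  ∀ (P : Type v) [PartialOrder P] [OrderBot P], WellFoundedLT P → CardDirected κ P →
    ∀ (D : P ⥤ M), IsSmooth D →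
      (∀ (a b : P) (h : IsSuccOf a b), cellP X (D.map (homOfLE h.1.le))) →
      ∀ (c : Cocone D), IsColimit c → CoyonedaPreserves A D c

/-- `A` is `κ`-presentable: `Hom(A, -)` preserves `κ`-filtered colimits. -/
def IsCardinalPresentable (κ : Cardinal.{v}) (A : M) : Prop :=
  ∀ (J : Type v) [SmallCategory J], CardFiltered κ J →
    ∀ (D : J ⥤ M) (c : Cocone D), IsColimit c → CoyonedaPreserves A D c

/-- `A` is presentable: `κ`-presentable for some regular cardinal `κ`. -/
def IsPresentableObj (A : M) : Prop :=
  ∃ κ : Cardinal.{v}, κ.IsRegular ∧ IsCardinalPresentable κ A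

/-! ### Notions of cofibrant generation -/

/-- `X` is a (small) generating set: `X ⊆ L` and `X^□ = R`. -/
structure IsGeneratingSet (L R : MorphismProperty M) (X : Set (Arrow M)) : Prop where
  small : Small.{v} X
  subset : ∀ a ∈ X, L a.hom
  rlp : rlpSet X = R

def SetwiseCofGen (L R : MorphismProperty M) : Prop :=
  ∃ X : Set (Arrow M), IsGeneratingSet L R X

def WeaklyCofGenBy (L R : MorphismProperty M) (X : Set (Arrow M)) : Prop :=
  IsGeneratingSet L R X ∧ cofP X = L

def CofGenBy (L R : MorphismProperty M) (X : Set (Arrow M)) (κ : Cardinal.{v}) : Prop :=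
  IsGeneratingSet L R X ∧ ∀ a ∈ X, SmallRel κ X a.left

def StrictlyCofGenBy (L R : MorphismProperty M) (X : Set (Arrow M)) (κ : Cardinal.{v}) : Prop :=
  IsGeneratingSet L R X ∧ ∀ a ∈ X, StrictlySmallRel κ X a.left

def SemiPerfectlyCofGenBy (L R : MorphismProperty M) (X : Set (Arrow M)) (κ : Cardinal.{v}) :
    Prop :=
  IsGeneratingSet L R X ∧ ∀ a ∈ X, IsCardinalPresentable κ a.left

def PerfectlyCofGenBy (L R : MorphismProperty M) (X : Set (Arrow M)) (κ : Cardinal.{v}) : Prop :=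
  SemiPerfectlyCofGenBy L R X κ ∧ ∀ a ∈ X, IsCardinalPresentable κ a.right

def CofGen (L R : MorphismProperty M) : Prop :=
  ∃ (X : Set (Arrow M)) (κ : Cardinal.{v}), κ.IsRegular ∧ CofGenBy L R X κ

def StrictlyCofGen (L R : MorphismProperty M) : Prop :=
  ∃ (X : Set (Arrow M)) (κ : Cardinal.{v}), κ.IsRegular ∧ StrictlyCofGenBy L R X κ

def SemiPerfectlyCofGen (L R : MorphismProperty M) : Prop :=
  ∃ (X : Set (Arrow M)) (κ : Cardinal.{v}), κ.IsRegular ∧ SemiPerfectlyCofGenBy L R X κ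

def PerfectlyCofGen (L R : MorphismProperty M) : Prop :=
  ∃ (X : Set (Arrow M)) (κ : Cardinal.{v}), κ.IsRegular ∧ PerfectlyCofGenBy L R X κ

/-! ### Cofibrant objects -/

/-- `A` is `L`-cofibrant: the morphism from an initial object to `A` lies in `L`. -/
def CofibrantObj (L : MorphismProperty M) (A : M) : Prop :=
  ∀ ⦃I : M⦄ (hI : IsInitial I), L (hI.to A)

/-- `A` is `R`-fibrant: the morphism from `A` to a terminal object lies in `R`. -/
def FibrantObj (R : MorphismProperty M) (A : M) : Prop :=
  ∀ ⦃T : M⦄ (hT : IsTerminal T), R (hT.from A)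

/-- A set of objects closed under `λ`-small colimits (diagrams with fewer than `λ` morphisms). -/
def ClosedUnderColimitsCard (lam : Cardinal.{v}) (S : Set M) : Prop :=
  ∀ (J : Type v) [SmallCategory J], Cardinal.mk (Arrow J) < lam →
    ∀ (D : J ⥤ M) (c : Cocone D), IsColimit c → (∀ j, D.obj j ∈ S) → c.pt ∈ S

/-- The smallest class of objects containing the domains and codomains of `X` and closed
under `λ`-small colimits in `M`. -/
def Atilde (X : Set (Arrow M)) (lam : Cardinal.{v}) : Set M :=
  { m | ∀ S : Set M, (∀ a ∈ X, a.left ∈ S ∧ a.right ∈ S) →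
      ClosedUnderColimitsCard lam S → m ∈ S }

/-- `A(X, λ)`: the intersection of `Atilde X λ` with the cofibrant objects. -/
def Aset (L : MorphismProperty M) (X : Set (Arrow M)) (lam : Cardinal.{v}) : Set M :=
  { m | m ∈ Atilde X lam ∧ CofibrantObj L m }

/-- A set of objects is essentially small. -/
def EssentiallySmallSet (S : Set M) : Prop :=
  ∃ T : Set M, Small.{v} T ∧ T ⊆ S ∧ ∀ m ∈ S, ∃ t ∈ T, Nonempty (m ≅ t)

/-- `A` is a `λ`-filtered colimit (in `M`) of objects from `S`. -/
def IsCardFilteredColimitOf (lam : Cardinal.{v}) (S : Set M) (A : M) : Prop :=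
  ∃ J : Cat.{v, v}, CardFiltered lam J ∧
    ∃ D : J ⥤ M, (∀ j, D.obj j ∈ S) ∧ ∃ c : Cocone D, Nonempty (IsColimit c) ∧ c.pt = A

/-! ### Preaccessible and locally presentable categories -/

def PreaccessibleAt (lam : Cardinal.{v}) (C : Type u₁) [Category.{v} C] : Prop :=
  ∃ A : Set C, Small.{v} A ∧ (∀ a ∈ A, IsCardinalPresentable lam a) ∧
    ∀ X : C, IsCardFilteredColimitOf lam A X

def Preaccessible (C : Type u₁) [Category.{v} C] : Prop :=
  ∃ lam : Cardinal.{v}, lam.IsRegular ∧ PreaccessibleAt lam C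

def LocallyPresentable (C : Type u₁) [Category.{v} C] : Prop :=
  HasColimitsOfSize.{v, v} C ∧ Preaccessible C

/-! ### Vopěnka's principle -/

/-- A graph: a type with a binary relation. -/
structure Graph : Type (v + 1) where
  V : Type v
  E : V → V → Prop

/-- A homomorphism of graphs. -/
structure GraphHom (G H : Graph.{v}) : Type v where
  toFun : G.V → H.V
  map : ∀ {a b : G.V}, G.E a b → H.E (toFun a) (toFun b)

/-- Vopěnka's principle: for every ordinal-indexed family of graphs there exist two distinct
indices and a homomorphism between the corresponding graphs; equivalently, the category of
graphs has no large discrete full subcategory. -/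
def VopenkaPrinciple : Prop :=
  ∀ G : Ordinal.{v} → Graph.{v}, ∃ i j : Ordinal.{v}, i ≠ j ∧ Nonempty (GraphHom (G i) (G j))


/-- The one-point compact Hausdorff space. -/
def chPoint : CompHaus.{u} := CompHaus.of PUnit.{u + 1}

/-- The empty compact Hausdorff space. -/
def chEmpty : CompHaus.{u} := CompHaus.of PEmpty.{u + 1}

/-! ### Auxiliary material for Statement 3 -/

section Statement3Aux

attribute [local instance] CategoryTheory.ConcreteCategory.instFunLike

open Cardinal in
/-- The objects of a small category inject into its arrows. -/
lemma mk_le_mk_arrow (A : Type u₁) [SmallCategory A] : Cardinal.mk A ≤ Cardinal.mk (Arrow A) :=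
  Cardinal.mk_le_of_injective (f := fun a => Arrow.mk (𝟙 a))
    (fun _ _ h => congrArg CategoryTheory.Comma.left h)

/-- The canonical well-order of a regular cardinal is `κ`-filtered. -/
lemma cardFiltered_toType {κ : Cardinal.{w}} (hκ : κ.IsRegular) :
    CardFiltered.{w} κ κ.ord.ToType := by
  intro A _ hA F
  have hobj : Cardinal.mk (Set.range F.obj) < κ :=
    lt_of_le_of_lt (le_trans Cardinal.mk_range_le (mk_le_mk_arrow A)) hA
  haveI : IsWellOrder κ.ord.ToType (· < ·) := isWellOrder_lt
  have hbd : Set.Bounded (· < ·) (Set.range F.obj) := by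
    by_contra hnb
    have hcof : IsCofinal (Set.range F.obj) := fun a => by
      unfold Set.Bounded at hnb
      push_neg at hnb
      obtain ⟨b, hb, hab⟩ := hnb a
      exact ⟨b, hb, hab⟩
    have hle := Order.cof_le hcof
    rw [Ordinal.cof_toType, hκ.cof_eq] at hle
    exact absurd hobj (not_lt.mpr hle)
  obtain ⟨b, hb⟩ := hbd
  exact ⟨{ pt := b,
           ι := { app := fun a => homOfLE (hb _ ⟨a, rfl⟩).le,
                  naturality := fun _ _ _ => Subsingleton.elim _ _ } }⟩

/-- The chain of initial segments of a well-order, as a diagram of types. -/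
noncomputable def chainE (κ : Cardinal.{w}) : κ.ord.ToType ⥤ Type w where
  obj j := {i : κ.ord.ToType // i ≤ j}
  map {j j'} f := TypeCat.ofHom fun x => ⟨x.1, x.2.trans (leOfHom f)⟩
  map_id := fun j => rfl
  map_comp := fun f g => rfl

/-- The canonical cocone on `chainE` with point the whole well-order. -/
noncomputable def chainCocone (κ : Cardinal.{w}) : Cocone (chainE κ) where
  pt := κ.ord.ToType
  ι := { app := fun j => TypeCat.ofHom fun x => x.1, naturality := fun _ _ _ => rfl }

/-- The canonical cocone on `chainE` is a colimit cocone in `Type`. -/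
noncomputable def chainIsColimit (κ : Cardinal.{w}) : IsColimit (chainCocone κ) where
  desc s := TypeCat.ofHom fun p => s.ι.app p ⟨p, le_rfl⟩
  fac s j := by
    ext x
    have h := ConcreteCategory.congr_hom (s.ι.naturality (homOfLE x.2 : (x.1 : κ.ord.ToType) ⟶ j)) ⟨x.1, le_rfl⟩
    exact h.symm
  uniq s m hm := by
    ext p
    exact ConcreteCategory.congr_hom (hm p) ⟨p, le_rfl⟩

/-- The free compact Hausdorff space functor (via the ultrafilter monad). -/
noncomputable def betaF : Type u ⥤ CompHaus.{u} :=
  Compactum.free ⋙ compactumToCompHaus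

noncomputable instance : Limits.PreservesColimitsOfSize.{u, u} Compactum.free.{u} :=
  Compactum.adj.leftAdjoint_preservesColimits

noncomputable instance : Limits.PreservesColimitsOfSize.{u, u} betaF.{u} := by
  unfold betaF
  infer_instance

/-- The filter of subsets whose complement has cardinality `< κ`. -/
def cosmall {κ : Cardinal.{u}} (hκ : κ.IsRegular) : Filter κ.ord.ToType :=
  Filter.comk (fun s => Cardinal.mk s < κ)
    (by simpa using hκ.pos)
    (fun t ht s hs => lt_of_le_of_lt (Cardinal.mk_le_mk_of_subset hs) ht)
    (fun s hs t ht => lt_of_le_of_lt (Cardinal.mk_union_le s t)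
      (Cardinal.add_lt_of_lt hκ.aleph0_le hs ht))

lemma cosmall_neBot {κ : Cardinal.{u}} (hκ : κ.IsRegular) : (cosmall hκ).NeBot := by
  constructor
  intro h
  have h0 : (∅ : Set κ.ord.ToType) ∈ cosmall hκ := h ▸ Filter.mem_bot
  have h1 : Cardinal.mk ((∅ : Set κ.ord.ToType)ᶜ : Set κ.ord.ToType) < κ := Filter.mem_comk.mp h0
  rw [Set.compl_empty] at h1
  rw [Cardinal.mk_univ, Cardinal.mk_toType, Cardinal.card_ord] at h1
  exact absurd h1 (lt_irrefl κ)

/-- **Part 1.** The point is not `κ`-presentable in `CompHaus` for any regular `κ`. -/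
lemma not_isCardinalPresentable_chPoint (κ : Cardinal.{u}) (hκ : κ.IsRegular) :
    ¬ IsCardinalPresentable κ chPoint.{u} := by
  intro h
  haveI := cosmall_neBot hκ
  set U : Ultrafilter κ.ord.ToType := Ultrafilter.of (cosmall hκ) with hUdef
  obtain ⟨hc⟩ := h κ.ord.ToType (cardFiltered_toType hκ)
      (chainE κ ⋙ betaF) (betaF.mapCocone (chainCocone κ))
      (Limits.isColimitOfPreserves betaF (chainIsColimit κ))
  let x : chPoint.{u} ⟶ betaF.obj κ.ord.ToType :=
    ConcreteCategory.ofHom ⟨fun _ => U, continuous_const⟩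
  obtain ⟨j, y, hy⟩ := Types.jointly_surjective _ hc x
  let y' : chPoint.{u} ⟶ betaF.obj ((chainE κ).obj j) := y
  let V : Ultrafilter {i : κ.ord.ToType // i ≤ j} := y' PUnit.unit
  -- evaluate at the point
  have h2 : (betaF.map ((chainCocone κ).ι.app j)) V = U :=
    congrArg (fun (f : chPoint.{u} ⟶ betaF.obj κ.ord.ToType) => f PUnit.unit) hy
  have hmapeq : (betaF.map ((chainCocone κ).ι.app j)) V =
      Ultrafilter.map (fun i => i.1) V := rfl
  have hIic : Set.Iic j ∈ U := by
    rw [← h2, hmapeq, Ultrafilter.mem_map]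
    have hpre : ((fun (i : {i : κ.ord.ToType // i ≤ j}) => i.1) ⁻¹' Set.Iic j) = Set.univ :=
      Set.eq_univ_of_forall fun z => z.2
    rw [hpre]
    exact Filter.univ_mem
  have hIic_lt : Cardinal.mk (Set.Iic j) < κ := by
    have hsub : Set.Iic j ⊆ insert j (Set.Iio j) := by
      intro i hi
      rcases eq_or_lt_of_le (Set.mem_Iic.mp hi) with h' | h'
      · exact Set.mem_insert_iff.mpr (Or.inl h')
      · exact Set.mem_insert_iff.mpr (Or.inr h')
    calc Cardinal.mk (Set.Iic j) ≤ Cardinal.mk (insert j (Set.Iio j) : Set κ.ord.ToType) :=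
          Cardinal.mk_le_mk_of_subset hsub
      _ ≤ Cardinal.mk (Set.Iio j) + 1 := Cardinal.mk_insert_le
      _ < κ := Cardinal.add_lt_of_lt hκ.aleph0_le (Cardinal.mk_Iio_ord_toType j)
          (lt_of_lt_of_le Cardinal.one_lt_aleph0 hκ.aleph0_le)
  have hcompl : (Set.Iic j)ᶜ ∈ U := by
    rw [← Ultrafilter.mem_coe]
    exact Ultrafilter.of_le (cosmall hκ) (Filter.compl_mem_comk.mpr hIic_lt)
  exact (Ultrafilter.compl_mem_iff_notMem.mp hcompl) hIic

/-- A retract of a `κ`-presentable object is `κ`-presentable. -/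
lemma isCardinalPresentable_of_retract {A B : M} (i : A ⟶ B) (r : B ⟶ A)
    (hir : i ≫ r = 𝟙 A) (κ : Cardinal.{v}) (hB : IsCardinalPresentable κ B) :
    IsCardinalPresentable κ A := by
  intro J _ hJ D c hc
  obtain ⟨hB'⟩ := hB J hJ D c hc
  -- transport cocones along the retraction
  let shat : Cocone (D ⋙ coyoneda.obj (op A)) → Cocone (D ⋙ coyoneda.obj (op B)) := fun s =>
    { pt := s.pt
      ι := { app := fun j => TypeCat.ofHom fun g => s.ι.app j (i ≫ g)
             naturality := fun j j' f => by
               ext g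
               have h := ConcreteCategory.congr_hom (s.ι.naturality f) (i ≫ (g : B ⟶ D.obj j) : A ⟶ D.obj j)
               dsimp at h ⊢
               rw [← Category.assoc]
               exact h } }
  constructor
  refine { desc := fun s => TypeCat.ofHom fun f => hB'.desc (shat s) (r ≫ f), fac := ?_, uniq := ?_ }
  · intro s j
    ext g
    have h := ConcreteCategory.congr_hom (hB'.fac (shat s) j) (r ≫ (g : A ⟶ D.obj j) : B ⟶ D.obj j)
    dsimp at h ⊢
    rw [← Category.assoc, h]
    show s.ι.app j (i ≫ r ≫ g) = _
    rw [← Category.assoc, hir, Category.id_comp]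
  · intro s m hm
    ext f
    have hmdesc : TypeCat.ofHom (fun g : B ⟶ c.pt => m (i ≫ g)) = hB'.desc (shat s) := by
      apply hB'.uniq (shat s)
      intro j
      ext g
      have h := ConcreteCategory.congr_hom (hm j) (i ≫ (g : B ⟶ D.obj j) : A ⟶ D.obj j)
      dsimp at h ⊢
      rw [Category.assoc] at h
      exact h
    have h1 : m f = m (i ≫ (r ≫ f)) := by rw [← Category.assoc, hir, Category.id_comp]
    refine h1.trans ?_
    exact ConcreteCategory.congr_hom hmdesc (r ≫ (f : A ⟶ c.pt) : B ⟶ c.pt)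

/-- **Part 2.** The empty compact Hausdorff space is presentable. -/
lemma isPresentableObj_chEmpty : IsPresentableObj chEmpty.{u} := by
  refine ⟨Cardinal.aleph0, Cardinal.isRegular_aleph0, ?_⟩
  intro J _ hJ D c hc
  haveI hE : IsEmpty ((forget CompHaus.{u}).obj chEmpty.{u}) :=
    inferInstanceAs (IsEmpty PEmpty.{u+1})
  have hsub : ∀ Y : CompHaus.{u}, Subsingleton (chEmpty.{u} ⟶ Y) := fun Y =>
    ⟨fun f g => DFunLike.ext f g fun x => hE.elim x⟩
  -- the unique map out of the empty space
  let e : ∀ Y : CompHaus.{u}, chEmpty.{u} ⟶ Y := fun Y =>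
    ConcreteCategory.ofHom ⟨fun x => isEmptyElim (α := PEmpty.{u+1}) x,
      continuous_bot⟩
  -- J is nonempty
  haveI : IsEmpty (Arrow (Discrete PEmpty.{u+1})) := ⟨fun f => f.left.as.elim⟩
  have hcard0 : Cardinal.mk (Arrow (Discrete PEmpty.{u+1})) < Cardinal.aleph0 :=
    lt_of_eq_of_lt (Cardinal.mk_eq_zero _) Cardinal.aleph0_pos
  obtain ⟨cc₀⟩ := hJ (Discrete PEmpty.{u+1}) hcard0 (Discrete.functor fun x => x.elim)
  set j₀ : J := cc₀.pt with hj₀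
  -- any two objects of J admit a cospan
  have hpair : ∀ j j' : J, ∃ (k : J) (_ : j ⟶ k) (_ : j' ⟶ k), True := by
    intro j j'
    have hsubhom : ∀ X Y : Discrete (ULift.{u} Bool), Subsingleton (X ⟶ Y) := fun X Y =>
      ⟨fun a b => by obtain ⟨⟨ha⟩⟩ := a; obtain ⟨⟨hb⟩⟩ := b; rfl⟩
    haveI fin0 : Finite (Discrete (ULift.{u} Bool)) :=
      Finite.of_injective Discrete.as (fun a b h => by cases a; cases b; cases h; rfl)
    haveI fin2 : Finite (Arrow (Discrete (ULift.{u} Bool))) := by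
      apply Finite.of_injective
        (f := fun f : Arrow (Discrete (ULift.{u} Bool)) => (f.left, f.right))
      rintro ⟨fl, fr, fh⟩ ⟨gl, gr, gh⟩ h
      injection h with h1 h2
      subst h1; subst h2
      congr 1
      exact (hsubhom _ _).elim _ _
    have hcard2 : Cardinal.mk (Arrow (Discrete (ULift.{u} Bool))) < Cardinal.aleph0 :=
      Cardinal.lt_aleph0_of_finite _
    obtain ⟨cc⟩ := hJ (Discrete (ULift.{u} Bool)) hcard2
      (Discrete.functor fun b => cond b.down j j')
    exact ⟨cc.pt, cc.ι.app ⟨ULift.up true⟩, cc.ι.app ⟨ULift.up false⟩, trivial⟩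
  constructor
  refine { desc := fun s => TypeCat.ofHom fun _ => s.ι.app j₀ (e (D.obj j₀)), fac := ?_, uniq := ?_ }
  · intro s j
    ext g
    obtain ⟨k, u, v, -⟩ := hpair j j₀
    have h1 := ConcreteCategory.congr_hom (s.ι.naturality u) g
    have h2 := ConcreteCategory.congr_hom (s.ι.naturality v) (e (D.obj j₀))
    dsimp at h1 h2 ⊢
    have h3 : g ≫ D.map u = e (D.obj j₀) ≫ D.map v := (hsub _).elim _ _
    rw [← h1, h3, h2]
  · intro s m hm
    ext f
    have h := ConcreteCategory.congr_hom (hm j₀) (e (D.obj j₀))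
    dsimp at h ⊢
    have h3 : e (D.obj j₀) ≫ c.ι.app j₀ = f := (hsub _).elim _ _
    rw [← h3]
    exact h

/-- Any point of a compact Hausdorff space exhibits the one-point space as a retract. -/
lemma exists_point_retract (X : CompHaus.{u}) (x : X) :
    ∃ (i : chPoint.{u} ⟶ X) (r : X ⟶ chPoint.{u}), i ≫ r = 𝟙 chPoint.{u} := by
  haveI : Subsingleton ((forget CompHaus.{u}).obj chPoint.{u}) :=
    inferInstanceAs (Subsingleton PUnit.{u+1})
  refine ⟨ConcreteCategory.ofHom { toFun := fun _ => x, continuous_toFun := continuous_const },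
    ConcreteCategory.ofHom { toFun := fun _ => PUnit.unit, continuous_toFun := continuous_const }, ?_⟩
  exact DFunLike.ext _ _ fun z => Subsingleton.elim _ _

end Statement3Aux

/-- For every regular cardinal `λ`, the one-point space is not a
`λ`-presentable object of the category of compact Hausdorff spaces.  Consequently, the empty
space is the only presentable object of the category of compact Hausdorff spaces. -/
theorem statement3 :
    (∀ κ : Cardinal.{u}, κ.IsRegular → ¬ IsCardinalPresentable κ chPoint.{u}) ∧
    IsPresentableObj chEmpty.{u} ∧
    (∀ X : CompHaus.{u}, IsPresentableObj X → IsEmpty X) := by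
  refine ⟨fun κ hκ => not_isCardinalPresentable_chPoint κ hκ, isPresentableObj_chEmpty, ?_⟩
  intro X hX
  by_contra hne
  rw [not_isEmpty_iff] at hne
  obtain ⟨x⟩ := hne
  obtain ⟨κ, hκ, hpres⟩ := hX
  obtain ⟨i, r, hir⟩ := exists_point_retract X x
  exact not_isCardinalPresentable_chPoint κ hκ
    (isCardinalPresentable_of_retract i r hir κ hpres)


end Paper
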